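/- The discrete operator L^h is positive semi-definite: ⟨L^h p, p⟩ ≥ 0 for all p ∈ ℝ^{|Ω^h|}, and its kernel is exactly the span of the constant function 1 on Ω^h. -/

import Mathlib

/-- `(G_x H)_{ij} = (H_{i+1/2,j} − H_{i−1/2,j})/h`, where `Hx (i,j)` stands for `H_{i+1/2,j}`. -/
noncomputable def GHx (h : ℝ) (Hx : ℤ × ℤ → ℝ) (ij : ℤ × ℤ) : ℝ :=
  (Hx ij - Hx (ij.1 - 1, ij.2)) / h

/-- `(G_y H)_{ij} = (H_{i,j+1/2} − H_{i,j−1/2})/h`, where `Hy (i,j)` stands for `H_{i,j+1/2}`. -/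
noncomputable def GHy (h : ℝ) (Hy : ℤ × ℤ → ℝ) (ij : ℤ × ℤ) : ℝ :=
  (Hy ij - Hy (ij.1, ij.2 - 1)) / h

/-- The discrete operator
`L^h p = −D((H/ρ)Gp) + (GH)(1/m)(Σ p GH h²) + J^h 𝕀⁻¹ (Σ p J^h h²)` on the 2-D MAC grid
(with scalar inertia `I`). -/
noncomputable def Lh (h m I : ℝ) (ρx ρy Hx Hy Jh : ℤ × ℤ → ℝ) (p : ℤ × ℤ → ℝ)
    (ij : ℤ × ℤ) : ℝ :=
  -(((Hx ij / ρx ij) * ((p (ij.1 + 1, ij.2) - p ij) / h)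
      - (Hx (ij.1 - 1, ij.2) / ρx (ij.1 - 1, ij.2)) * ((p ij - p (ij.1 - 1, ij.2)) / h)) / h
    + ((Hy ij / ρy ij) * ((p (ij.1, ij.2 + 1) - p ij) / h)
      - (Hy (ij.1, ij.2 - 1) / ρy (ij.1, ij.2 - 1)) * ((p ij - p (ij.1, ij.2 - 1)) / h)) / h)
  + (GHx h Hx ij * (∑ᶠ kl : ℤ × ℤ, p kl * GHx h Hx kl)
      + GHy h Hy ij * (∑ᶠ kl : ℤ × ℤ, p kl * GHy h Hy kl)) * h ^ 2 / m
  + Jh ij * (∑ᶠ kl : ℤ × ℤ, p kl * Jh kl) * h ^ 2 / I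

open Function
open Function

/-- Support of a function vanishing wherever `p` vanishes is finite. -/
lemma supp_subset_fin {α : Type*} {p : α → ℝ} (hp : (support p).Finite) {F : α → ℝ}
    (hF : ∀ a, p a = 0 → F a = 0) : (support F).Finite :=
  hp.subset fun a ha => by
    simp only [Function.mem_support] at ha ⊢
    exact fun h => ha (hF a h)

lemma finsum_shift_x (g : ℤ × ℤ → ℝ) :
    (∑ᶠ ij : ℤ × ℤ, g (ij.1 - 1, ij.2)) = ∑ᶠ ij : ℤ × ℤ, g ij :=
  finsum_comp (fun ij => (ij.1 - 1, ij.2))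
    ⟨fun a b hab => by simp only [Prod.ext_iff] at hab ⊢; omega,
     fun b => ⟨(b.1 + 1, b.2), by simp⟩⟩

lemma finsum_shift_y (g : ℤ × ℤ → ℝ) :
    (∑ᶠ ij : ℤ × ℤ, g (ij.1, ij.2 - 1)) = ∑ᶠ ij : ℤ × ℤ, g ij :=
  finsum_comp (fun ij => (ij.1, ij.2 - 1))
    ⟨fun a b hab => by simp only [Prod.ext_iff] at hab ⊢; omega,
     fun b => ⟨(b.1, b.2 + 1), by simp⟩⟩

/-- Summation by parts in the `x` direction. -/
lemma sbp_x (f p : ℤ × ℤ → ℝ) (hf : (support f).Finite) (hp : (support p).Finite) :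
    (∑ᶠ ij : ℤ × ℤ, (f ij - f (ij.1 - 1, ij.2)) * p ij)
      = -∑ᶠ ij : ℤ × ℤ, f ij * (p (ij.1 + 1, ij.2) - p ij) := by
  have h1 : (support fun ij : ℤ × ℤ => f ij * p ij).Finite :=
    supp_subset_fin hf fun a ha => by simp [ha]
  have h2 : (support fun ij : ℤ × ℤ => f (ij.1 - 1, ij.2) * p ij).Finite :=
    supp_subset_fin hp fun a ha => by simp [ha]
  have h3 : (support fun ij : ℤ × ℤ => f ij * p (ij.1 + 1, ij.2)).Finite :=
    supp_subset_fin hf fun a ha => by simp [ha]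
  have key : (∑ᶠ ij : ℤ × ℤ, f (ij.1 - 1, ij.2) * p ij)
      = ∑ᶠ ij : ℤ × ℤ, f ij * p (ij.1 + 1, ij.2) := by
    rw [← finsum_shift_x (fun kl => f kl * p (kl.1 + 1, kl.2))]
    exact finsum_congr fun ij => by norm_num
  calc (∑ᶠ ij : ℤ × ℤ, (f ij - f (ij.1 - 1, ij.2)) * p ij)
      = ∑ᶠ ij : ℤ × ℤ, (f ij * p ij - f (ij.1 - 1, ij.2) * p ij) :=
        finsum_congr fun ij => by ring
    _ = (∑ᶠ ij : ℤ × ℤ, f ij * p ij) - ∑ᶠ ij : ℤ × ℤ, f (ij.1 - 1, ij.2) * p ij :=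
        finsum_sub_distrib h1 h2
    _ = (∑ᶠ ij : ℤ × ℤ, f ij * p ij) - ∑ᶠ ij : ℤ × ℤ, f ij * p (ij.1 + 1, ij.2) := by
        rw [key]
    _ = -∑ᶠ ij : ℤ × ℤ, f ij * (p (ij.1 + 1, ij.2) - p ij) := by
        rw [show (∑ᶠ ij : ℤ × ℤ, f ij * (p (ij.1 + 1, ij.2) - p ij))
            = ∑ᶠ ij : ℤ × ℤ, (f ij * p (ij.1 + 1, ij.2) - f ij * p ij) from
          finsum_congr fun ij => by ring, finsum_sub_distrib h3 h1]
        ring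

/-- Summation by parts in the `y` direction. -/
lemma sbp_y (f p : ℤ × ℤ → ℝ) (hf : (support f).Finite) (hp : (support p).Finite) :
    (∑ᶠ ij : ℤ × ℤ, (f ij - f (ij.1, ij.2 - 1)) * p ij)
      = -∑ᶠ ij : ℤ × ℤ, f ij * (p (ij.1, ij.2 + 1) - p ij) := by
  have h1 : (support fun ij : ℤ × ℤ => f ij * p ij).Finite :=
    supp_subset_fin hf fun a ha => by simp [ha]
  have h2 : (support fun ij : ℤ × ℤ => f (ij.1, ij.2 - 1) * p ij).Finite :=
    supp_subset_fin hp fun a ha => by simp [ha]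
  have h3 : (support fun ij : ℤ × ℤ => f ij * p (ij.1, ij.2 + 1)).Finite :=
    supp_subset_fin hf fun a ha => by simp [ha]
  have key : (∑ᶠ ij : ℤ × ℤ, f (ij.1, ij.2 - 1) * p ij)
      = ∑ᶠ ij : ℤ × ℤ, f ij * p (ij.1, ij.2 + 1) := by
    rw [← finsum_shift_y (fun kl => f kl * p (kl.1, kl.2 + 1))]
    exact finsum_congr fun ij => by norm_num
  calc (∑ᶠ ij : ℤ × ℤ, (f ij - f (ij.1, ij.2 - 1)) * p ij)
      = ∑ᶠ ij : ℤ × ℤ, (f ij * p ij - f (ij.1, ij.2 - 1) * p ij) :=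
        finsum_congr fun ij => by ring
    _ = (∑ᶠ ij : ℤ × ℤ, f ij * p ij) - ∑ᶠ ij : ℤ × ℤ, f (ij.1, ij.2 - 1) * p ij :=
        finsum_sub_distrib h1 h2
    _ = (∑ᶠ ij : ℤ × ℤ, f ij * p ij) - ∑ᶠ ij : ℤ × ℤ, f ij * p (ij.1, ij.2 + 1) := by
        rw [key]
    _ = -∑ᶠ ij : ℤ × ℤ, f ij * (p (ij.1, ij.2 + 1) - p ij) := by
        rw [show (∑ᶠ ij : ℤ × ℤ, f ij * (p (ij.1, ij.2 + 1) - p ij))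
            = ∑ᶠ ij : ℤ × ℤ, (f ij * p (ij.1, ij.2 + 1) - f ij * p ij) from
          finsum_congr fun ij => by ring, finsum_sub_distrib h3 h1]
        ring

lemma finsum_nonneg_eq_zero {α : Type*} {f : α → ℝ} (hf : (support f).Finite)
    (h0 : ∀ a, 0 ≤ f a) (hs : (∑ᶠ a, f a) = 0) : ∀ a, f a = 0 := by
  intro a
  by_cases ha : a ∈ hf.toFinset
  · exact (Finset.sum_eq_zero_iff_of_nonneg fun i _ => h0 i).1
      (by rw [← finsum_eq_sum f hf]; exact hs) a ha
  · rw [hf.mem_toFinset] at ha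
    exact notMem_support.mp ha

lemma alg1 {h a d : ℝ} (hh : h ≠ 0) : (a * (d / h)) * d = h * (a * (d / h) ^ 2) := by
  field_simp

lemma quad_form (h m I : ℝ) (hh : h ≠ 0)
    (ρx ρy Hx Hy Jh : ℤ × ℤ → ℝ)
    (hHx : (support Hx).Finite) (hHy : (support Hy).Finite)
    (p : ℤ × ℤ → ℝ) (hp : (support p).Finite) :
    (∑ᶠ ij : ℤ × ℤ, Lh h m I ρx ρy Hx Hy Jh p ij * p ij)
      = (∑ᶠ ij : ℤ × ℤ, (Hx ij / ρx ij) * ((p (ij.1 + 1, ij.2) - p ij) / h) ^ 2)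
      + (∑ᶠ ij : ℤ × ℤ, (Hy ij / ρy ij) * ((p (ij.1, ij.2 + 1) - p ij) / h) ^ 2)
      + (∑ᶠ kl : ℤ × ℤ, p kl * GHx h Hx kl) ^ 2 * h ^ 2 / m
      + (∑ᶠ kl : ℤ × ℤ, p kl * GHy h Hy kl) ^ 2 * h ^ 2 / m
      + (∑ᶠ kl : ℤ × ℤ, p kl * Jh kl) ^ 2 * h ^ 2 / I := by
  set A := ∑ᶠ kl : ℤ × ℤ, p kl * GHx h Hx kl with hA
  set B := ∑ᶠ kl : ℤ × ℤ, p kl * GHy h Hy kl with hB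
  set C := ∑ᶠ kl : ℤ × ℤ, p kl * Jh kl with hC
  set tx : ℤ × ℤ → ℝ := fun ij => (Hx ij / ρx ij) * ((p (ij.1 + 1, ij.2) - p ij) / h)
    with htx
  set ty : ℤ × ℤ → ℝ := fun ij => (Hy ij / ρy ij) * ((p (ij.1, ij.2 + 1) - p ij) / h)
    with hty
  -- pointwise decomposition
  have hpt : ∀ ij : ℤ × ℤ, Lh h m I ρx ρy Hx Hy Jh p ij * p ij
      = (-(1/h) * ((tx ij - tx (ij.1 - 1, ij.2)) * p ij))
      + (-(1/h) * ((ty ij - ty (ij.1, ij.2 - 1)) * p ij))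
      + ((A * h ^ 2 / m) * (GHx h Hx ij * p ij))
      + ((B * h ^ 2 / m) * (GHy h Hy ij * p ij))
      + ((C * h ^ 2 / I) * (Jh ij * p ij)) := by
    intro ij
    simp only [Lh, htx, hty, ← hA, ← hB, ← hC]
    norm_num
    ring
  rw [finsum_congr hpt]
  -- finiteness of the five pieces
  have f1 : (support fun ij : ℤ × ℤ =>
      -(1/h) * ((tx ij - tx (ij.1 - 1, ij.2)) * p ij)).Finite :=
    supp_subset_fin hp fun a ha => by simp [ha]
  have f2 : (support fun ij : ℤ × ℤ =>
      -(1/h) * ((ty ij - ty (ij.1, ij.2 - 1)) * p ij)).Finite :=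
    supp_subset_fin hp fun a ha => by simp [ha]
  have f3 : (support fun ij : ℤ × ℤ => (A * h ^ 2 / m) * (GHx h Hx ij * p ij)).Finite :=
    supp_subset_fin hp fun a ha => by simp [ha]
  have f4 : (support fun ij : ℤ × ℤ => (B * h ^ 2 / m) * (GHy h Hy ij * p ij)).Finite :=
    supp_subset_fin hp fun a ha => by simp [ha]
  have f5 : (support fun ij : ℤ × ℤ => (C * h ^ 2 / I) * (Jh ij * p ij)).Finite :=
    supp_subset_fin hp fun a ha => by simp [ha]
  rw [finsum_add_distrib (supp_subset_fin hp fun a ha => by simp [ha] : (support fun ij : ℤ × ℤ =>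
        (-(1/h) * ((tx ij - tx (ij.1 - 1, ij.2)) * p ij))
        + (-(1/h) * ((ty ij - ty (ij.1, ij.2 - 1)) * p ij))
        + ((A * h ^ 2 / m) * (GHx h Hx ij * p ij))
        + ((B * h ^ 2 / m) * (GHy h Hy ij * p ij))).Finite) f5,
      finsum_add_distrib (supp_subset_fin hp fun a ha => by simp [ha] : (support fun ij : ℤ × ℤ =>
        (-(1/h) * ((tx ij - tx (ij.1 - 1, ij.2)) * p ij))
        + (-(1/h) * ((ty ij - ty (ij.1, ij.2 - 1)) * p ij))
        + ((A * h ^ 2 / m) * (GHx h Hx ij * p ij))).Finite) f4,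
      finsum_add_distrib (supp_subset_fin hp fun a ha => by simp [ha] : (support fun ij : ℤ × ℤ =>
        (-(1/h) * ((tx ij - tx (ij.1 - 1, ij.2)) * p ij))
        + (-(1/h) * ((ty ij - ty (ij.1, ij.2 - 1)) * p ij))).Finite) f3,
      finsum_add_distrib f1 f2]
  -- support of tx, ty
  have htxf : (support tx).Finite := supp_subset_fin hHx (fun a ha => by simp [htx, ha])
  have htyf : (support ty).Finite := supp_subset_fin hHy (fun a ha => by simp [hty, ha])
  -- term 1
  have T1 : (∑ᶠ ij : ℤ × ℤ, -(1/h) * ((tx ij - tx (ij.1 - 1, ij.2)) * p ij))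
      = ∑ᶠ ij : ℤ × ℤ, (Hx ij / ρx ij) * ((p (ij.1 + 1, ij.2) - p ij) / h) ^ 2 := by
    rw [← mul_finsum _ _,
        sbp_x tx p htxf hp]
    rw [show (∑ᶠ ij : ℤ × ℤ, tx ij * (p (ij.1 + 1, ij.2) - p ij))
        = ∑ᶠ ij : ℤ × ℤ, h * ((Hx ij / ρx ij) * ((p (ij.1 + 1, ij.2) - p ij) / h) ^ 2) from
      finsum_congr fun ij => by simp only [htx]; exact alg1 hh]
    rw [← mul_finsum _ _]
    field_simp
  have T2 : (∑ᶠ ij : ℤ × ℤ, -(1/h) * ((ty ij - ty (ij.1, ij.2 - 1)) * p ij))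
      = ∑ᶠ ij : ℤ × ℤ, (Hy ij / ρy ij) * ((p (ij.1, ij.2 + 1) - p ij) / h) ^ 2 := by
    rw [← mul_finsum _ _,
        sbp_y ty p htyf hp]
    rw [show (∑ᶠ ij : ℤ × ℤ, ty ij * (p (ij.1, ij.2 + 1) - p ij))
        = ∑ᶠ ij : ℤ × ℤ, h * ((Hy ij / ρy ij) * ((p (ij.1, ij.2 + 1) - p ij) / h) ^ 2) from
      finsum_congr fun ij => by simp only [hty]; exact alg1 hh]
    rw [← mul_finsum _ _]
    field_simp
  have T3 : (∑ᶠ ij : ℤ × ℤ, (A * h ^ 2 / m) * (GHx h Hx ij * p ij)) = A ^ 2 * h ^ 2 / m := by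
    rw [← mul_finsum _ _,
        show (∑ᶠ ij : ℤ × ℤ, GHx h Hx ij * p ij) = A from
          (finsum_congr fun ij => mul_comm _ _).trans hA.symm]
    ring
  have T4 : (∑ᶠ ij : ℤ × ℤ, (B * h ^ 2 / m) * (GHy h Hy ij * p ij)) = B ^ 2 * h ^ 2 / m := by
    rw [← mul_finsum _ _,
        show (∑ᶠ ij : ℤ × ℤ, GHy h Hy ij * p ij) = B from
          (finsum_congr fun ij => mul_comm _ _).trans hB.symm]
    ring
  have T5 : (∑ᶠ ij : ℤ × ℤ, (C * h ^ 2 / I) * (Jh ij * p ij)) = C ^ 2 * h ^ 2 / I := by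
    rw [← mul_finsum _ _,
        show (∑ᶠ ij : ℤ × ℤ, Jh ij * p ij) = C from
          (finsum_congr fun ij => mul_comm _ _).trans hC.symm]
    ring
  rw [T1, T2, T3, T4, T5]

/-- The discrete operator `L^h` is positive semi-definite,
`⟨L^h p, p⟩ ≥ 0` for every grid function `p` on `Ω^h`, and its kernel is exactly the span of
the constant function `1` on `Ω^h`.  Here `S` plays the role of the finite node set `Ω^h`;
`H > 0` on all edges between nodes of `S`, edges carrying a nonzero Heaviside value have
both endpoints in `S` and the resulting edge-graph on `S` is connected, and the discrete
identities `Σ GH = 0` and `Σ J^h = 0` are available. -/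
theorem Lh_posSemidef_and_kernel
    (h m I : ℝ) (hh : 0 < h) (hm : 0 < m) (hI : 0 < I)
    (ρx ρy : ℤ × ℤ → ℝ) (hρx : ∀ ij, 0 < ρx ij) (hρy : ∀ ij, 0 < ρy ij)
    (Hx Hy : ℤ × ℤ → ℝ)
    (hHx01 : ∀ ij, Hx ij ∈ Set.Icc (0 : ℝ) 1) (hHy01 : ∀ ij, Hy ij ∈ Set.Icc (0 : ℝ) 1)
    (hHx : (Function.support Hx).Finite) (hHy : (Function.support Hy).Finite)
    (Jh : ℤ × ℤ → ℝ)
    (S : Finset (ℤ × ℤ))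
    -- edges with nonzero Heaviside value join nodes of Ω^h = S
    (hedgex : ∀ ij : ℤ × ℤ, Hx ij ≠ 0 → ij ∈ S ∧ (ij.1 + 1, ij.2) ∈ S)
    (hedgey : ∀ ij : ℤ × ℤ, Hy ij ≠ 0 → ij ∈ S ∧ (ij.1, ij.2 + 1) ∈ S)
    -- J^h is supported on nodes of Ω^h
    (hJsupp : ∀ ij : ℤ × ℤ, Jh ij ≠ 0 → ij ∈ S)
    -- H is positive on edges between nodes of Ω^h
    (hposx : ∀ ij : ℤ × ℤ, ij ∈ S → (ij.1 + 1, ij.2) ∈ S → 0 < Hx ij)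
    (hposy : ∀ ij : ℤ × ℤ, ij ∈ S → (ij.1, ij.2 + 1) ∈ S → 0 < Hy ij)
    -- connectivity of Ω^h through edges with nonzero Heaviside value
    (hconn : ∀ q : ℤ × ℤ → ℝ,
      (∀ ij : ℤ × ℤ, Hx ij ≠ 0 → q (ij.1 + 1, ij.2) = q ij) →
      (∀ ij : ℤ × ℤ, Hy ij ≠ 0 → q (ij.1, ij.2 + 1) = q ij) →
      ∀ a ∈ S, ∀ b ∈ S, q a = q b)
    -- the discrete identities Σ GH = 0 and Σ J^h = 0
    (hGHx0 : (∑ᶠ ij : ℤ × ℤ, GHx h Hx ij) = 0)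
    (hGHy0 : (∑ᶠ ij : ℤ × ℤ, GHy h Hy ij) = 0)
    (hJ0 : (∑ᶠ ij : ℤ × ℤ, Jh ij) = 0) :
    (∀ p : ℤ × ℤ → ℝ, (Function.support p).Finite →
      0 ≤ ∑ᶠ ij : ℤ × ℤ, Lh h m I ρx ρy Hx Hy Jh p ij * p ij) ∧
    (∀ p : ℤ × ℤ → ℝ, (∀ ij, p ij ≠ 0 → ij ∈ S) →
      ((∀ ij ∈ S, Lh h m I ρx ρy Hx Hy Jh p ij = 0) ↔ ∃ k : ℝ, ∀ ij ∈ S, p ij = k)) := by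
  have hh' : h ≠ 0 := ne_of_gt hh
  have hJfin : (support Jh).Finite := S.finite_toSet.subset fun a ha => hJsupp a ha
  have hQx : ∀ p : ℤ × ℤ → ℝ, ∀ ij : ℤ × ℤ,
      0 ≤ (Hx ij / ρx ij) * ((p (ij.1 + 1, ij.2) - p ij) / h) ^ 2 :=
    fun p ij => mul_nonneg (div_nonneg (hHx01 ij).1 (hρx ij).le) (sq_nonneg _)
  have hQy : ∀ p : ℤ × ℤ → ℝ, ∀ ij : ℤ × ℤ,
      0 ≤ (Hy ij / ρy ij) * ((p (ij.1, ij.2 + 1) - p ij) / h) ^ 2 :=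
    fun p ij => mul_nonneg (div_nonneg (hHy01 ij).1 (hρy ij).le) (sq_nonneg _)
  constructor
  · -- positive semidefiniteness
    intro p hp
    rw [quad_form h m I hh' ρx ρy Hx Hy Jh hHx hHy p hp]
    have n1 : 0 ≤ ∑ᶠ ij : ℤ × ℤ, (Hx ij / ρx ij) * ((p (ij.1 + 1, ij.2) - p ij) / h) ^ 2 :=
      finsum_nonneg (hQx p)
    have n2 : 0 ≤ ∑ᶠ ij : ℤ × ℤ, (Hy ij / ρy ij) * ((p (ij.1, ij.2 + 1) - p ij) / h) ^ 2 :=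
      finsum_nonneg (hQy p)
    have n3 : 0 ≤ (∑ᶠ kl : ℤ × ℤ, p kl * GHx h Hx kl) ^ 2 * h ^ 2 / m := by positivity
    have n4 : 0 ≤ (∑ᶠ kl : ℤ × ℤ, p kl * GHy h Hy kl) ^ 2 * h ^ 2 / m := by positivity
    have n5 : 0 ≤ (∑ᶠ kl : ℤ × ℤ, p kl * Jh kl) ^ 2 * h ^ 2 / I := by positivity
    linarith
  · -- kernel characterization
    intro p hpS
    have hp : (support p).Finite := S.finite_toSet.subset fun a ha => hpS a ha
    constructor
    · -- kernel elements are constant on S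
      intro hL
      have hz : (∑ᶠ ij : ℤ × ℤ, Lh h m I ρx ρy Hx Hy Jh p ij * p ij) = 0 := by
        have : ∀ ij : ℤ × ℤ, Lh h m I ρx ρy Hx Hy Jh p ij * p ij = 0 := by
          intro ij
          by_cases hij : p ij = 0
          · rw [hij, mul_zero]
          · rw [hL ij (hpS ij hij), zero_mul]
        rw [finsum_congr this, finsum_zero]
      rw [quad_form h m I hh' ρx ρy Hx Hy Jh hHx hHy p hp] at hz
      have n1 : 0 ≤ ∑ᶠ ij : ℤ × ℤ, (Hx ij / ρx ij) * ((p (ij.1 + 1, ij.2) - p ij) / h) ^ 2 :=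
        finsum_nonneg (hQx p)
      have n2 : 0 ≤ ∑ᶠ ij : ℤ × ℤ, (Hy ij / ρy ij) * ((p (ij.1, ij.2 + 1) - p ij) / h) ^ 2 :=
        finsum_nonneg (hQy p)
      have n3 : 0 ≤ (∑ᶠ kl : ℤ × ℤ, p kl * GHx h Hx kl) ^ 2 * h ^ 2 / m := by positivity
      have n4 : 0 ≤ (∑ᶠ kl : ℤ × ℤ, p kl * GHy h Hy kl) ^ 2 * h ^ 2 / m := by positivity
      have n5 : 0 ≤ (∑ᶠ kl : ℤ × ℤ, p kl * Jh kl) ^ 2 * h ^ 2 / I := by positivity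
      have hQx0 : (∑ᶠ ij : ℤ × ℤ,
          (Hx ij / ρx ij) * ((p (ij.1 + 1, ij.2) - p ij) / h) ^ 2) = 0 := by linarith
      have hQy0 : (∑ᶠ ij : ℤ × ℤ,
          (Hy ij / ρy ij) * ((p (ij.1, ij.2 + 1) - p ij) / h) ^ 2) = 0 := by linarith
      have exQx : ∀ ij : ℤ × ℤ,
          (Hx ij / ρx ij) * ((p (ij.1 + 1, ij.2) - p ij) / h) ^ 2 = 0 :=
        finsum_nonneg_eq_zero (supp_subset_fin hHx fun a ha => by simp [ha]) (hQx p) hQx0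
      have exQy : ∀ ij : ℤ × ℤ,
          (Hy ij / ρy ij) * ((p (ij.1, ij.2 + 1) - p ij) / h) ^ 2 = 0 :=
        finsum_nonneg_eq_zero (supp_subset_fin hHy fun a ha => by simp [ha]) (hQy p) hQy0
      have movex : ∀ ij : ℤ × ℤ, Hx ij ≠ 0 → p (ij.1 + 1, ij.2) = p ij := by
        intro ij hne
        have hpos : 0 < Hx ij / ρx ij :=
          div_pos (lt_of_le_of_ne (hHx01 ij).1 (Ne.symm hne)) (hρx ij)
        have hsq : ((p (ij.1 + 1, ij.2) - p ij) / h) ^ 2 = 0 :=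
          (mul_eq_zero.mp (exQx ij)).resolve_left (ne_of_gt hpos)
        have hd : (p (ij.1 + 1, ij.2) - p ij) / h = 0 := by
          exact pow_eq_zero_iff (two_ne_zero) |>.mp hsq
        have := (div_eq_zero_iff.mp hd).resolve_right hh'
        linarith
      have movey : ∀ ij : ℤ × ℤ, Hy ij ≠ 0 → p (ij.1, ij.2 + 1) = p ij := by
        intro ij hne
        have hpos : 0 < Hy ij / ρy ij :=
          div_pos (lt_of_le_of_ne (hHy01 ij).1 (Ne.symm hne)) (hρy ij)
        have hsq : ((p (ij.1, ij.2 + 1) - p ij) / h) ^ 2 = 0 :=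
          (mul_eq_zero.mp (exQy ij)).resolve_left (ne_of_gt hpos)
        have hd : (p (ij.1, ij.2 + 1) - p ij) / h = 0 := by
          exact pow_eq_zero_iff (two_ne_zero) |>.mp hsq
        have := (div_eq_zero_iff.mp hd).resolve_right hh'
        linarith
      rcases S.eq_empty_or_nonempty with hS | ⟨a, haS⟩
      · exact ⟨0, fun ij hij => absurd hij (by simp [hS])⟩
      · exact ⟨p a, fun ij hij => hconn p movex movey ij hij a haS⟩
    · -- constants are in the kernel
      rintro ⟨k, hk⟩ ij hij
      have hGHxS : ∀ kl : ℤ × ℤ, GHx h Hx kl ≠ 0 → kl ∈ S := by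
        intro kl hne
        by_cases h1 : Hx kl = 0
        · have h2 : Hx (kl.1 - 1, kl.2) ≠ 0 := by
            intro h2; exact hne (by simp [GHx, h1, h2])
          have := (hedgex _ h2).2
          simpa using this
        · exact (hedgex kl h1).1
      have hGHyS : ∀ kl : ℤ × ℤ, GHy h Hy kl ≠ 0 → kl ∈ S := by
        intro kl hne
        by_cases h1 : Hy kl = 0
        · have h2 : Hy (kl.1, kl.2 - 1) ≠ 0 := by
            intro h2; exact hne (by simp [GHy, h1, h2])
          have := (hedgey _ h2).2
          simpa using this
        · exact (hedgey kl h1).1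
      have hA0 : (∑ᶠ kl : ℤ × ℤ, p kl * GHx h Hx kl) = 0 := by
        have e : (∑ᶠ kl : ℤ × ℤ, p kl * GHx h Hx kl)
            = ∑ᶠ kl : ℤ × ℤ, k * GHx h Hx kl :=
          finsum_congr fun kl => by
            by_cases hg : GHx h Hx kl = 0
            · rw [hg, mul_zero, mul_zero]
            · rw [hk kl (hGHxS kl hg)]
        rw [e, ← mul_finsum _ _,
          hGHx0, mul_zero]
      have hB0 : (∑ᶠ kl : ℤ × ℤ, p kl * GHy h Hy kl) = 0 := by
        have e : (∑ᶠ kl : ℤ × ℤ, p kl * GHy h Hy kl)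
            = ∑ᶠ kl : ℤ × ℤ, k * GHy h Hy kl :=
          finsum_congr fun kl => by
            by_cases hg : GHy h Hy kl = 0
            · rw [hg, mul_zero, mul_zero]
            · rw [hk kl (hGHyS kl hg)]
        rw [e, ← mul_finsum _ _,
          hGHy0, mul_zero]
      have hC0 : (∑ᶠ kl : ℤ × ℤ, p kl * Jh kl) = 0 := by
        have e : (∑ᶠ kl : ℤ × ℤ, p kl * Jh kl) = ∑ᶠ kl : ℤ × ℤ, k * Jh kl :=
          finsum_congr fun kl => by
            by_cases hg : Jh kl = 0
            · rw [hg, mul_zero, mul_zero]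
            · rw [hk kl (hJsupp kl hg)]
        rw [e, ← mul_finsum _ _, hJ0, mul_zero]
      have t1 : (Hx ij / ρx ij) * ((p (ij.1 + 1, ij.2) - p ij) / h) = 0 := by
        by_cases hne : Hx ij = 0
        · rw [hne]; simp
        · rw [hk _ (hedgex ij hne).2, hk _ (hedgex ij hne).1]; simp
      have t2 : (Hx (ij.1 - 1, ij.2) / ρx (ij.1 - 1, ij.2))
          * ((p ij - p (ij.1 - 1, ij.2)) / h) = 0 := by
        by_cases hne : Hx (ij.1 - 1, ij.2) = 0
        · rw [hne]; simp
        · have h2 := (hedgex _ hne).2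
          have h1 := (hedgex _ hne).1
          simp only [] at h2
          have h2' : ij ∈ S := by simpa using h2
          rw [hk _ h2', hk _ h1]; simp
      have t3 : (Hy ij / ρy ij) * ((p (ij.1, ij.2 + 1) - p ij) / h) = 0 := by
        by_cases hne : Hy ij = 0
        · rw [hne]; simp
        · rw [hk _ (hedgey ij hne).2, hk _ (hedgey ij hne).1]; simp
      have t4 : (Hy (ij.1, ij.2 - 1) / ρy (ij.1, ij.2 - 1))
          * ((p ij - p (ij.1, ij.2 - 1)) / h) = 0 := by
        by_cases hne : Hy (ij.1, ij.2 - 1) = 0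
        · rw [hne]; simp
        · have h2 := (hedgey _ hne).2
          have h1 := (hedgey _ hne).1
          have h2' : ij ∈ S := by simpa using h2
          rw [hk _ h2', hk _ h1]; simp
      simp only [Lh, hA0, hB0, hC0, t1, t2, t3, t4, mul_zero, zero_mul, add_zero,
        zero_add, zero_div, sub_zero, zero_sub, neg_zero, zero_pow]
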